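/- Let L : ℝ^m × ℝ^d → ℝ be such that for each x ∈ ℝ^m the function L(x, ·) : ℝ^d → ℝ is convex. Let x_n → x in ℝ^m and suppose that for every γ ∈ ℝ^d there exists a sequence γ_n → γ with limsup_{n→∞} L(x_n, γ_n) ≤ L(x, γ). Then for every β ∈ ℝ^d and every sequence β_n → β one has limsup_{n→∞} L(x_n, β_n) ≤ L(x, β). -/

import Mathlib

open Filter

/-- **Convexity argument for joint upper semicontinuity** (end of proof of continuity
of the Regime 2 local rate function).  Let `L : ℝ^m × ℝ^d → ℝ` be convex in its
second argument, let `xₙ → x`, and suppose that for every `γ` there is a sequence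
`γₙ → γ` with `limsup_n L(xₙ, γₙ) ≤ L(x, γ)`.  Then for every `β` and *every*
sequence `βₙ → β` one has `limsup_n L(xₙ, βₙ) ≤ L(x, β)`.
(Here `limsup aₙ ≤ a` is expressed as: for every `ε > 0`, eventually `aₙ ≤ a + ε`.) -/
theorem limsup_le_of_convex_of_exists_approx
    {m d : ℕ} (L : (Fin m → ℝ) → (Fin d → ℝ) → ℝ)
    (hconv : ∀ x : Fin m → ℝ, ConvexOn ℝ Set.univ (L x))
    (xs : ℕ → Fin m → ℝ) (x : Fin m → ℝ)
    (hx : Tendsto xs atTop (nhds x))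
    (happrox : ∀ γ : Fin d → ℝ, ∃ γs : ℕ → Fin d → ℝ,
      Tendsto γs atTop (nhds γ) ∧
      ∀ ε > (0 : ℝ), ∀ᶠ n in atTop, L (xs n) (γs n) ≤ L x γ + ε) :
    ∀ (β : Fin d → ℝ) (βs : ℕ → Fin d → ℝ), Tendsto βs atTop (nhds β) →
      ∀ ε > (0 : ℝ), ∀ᶠ n in atTop, L (xs n) (βs n) ≤ L x β + ε := by
  have hLcont : Continuous (L x) := by
    have := (hconv x).continuousOn isOpen_univ
    rwa [← continuousOn_univ]
  have key : ∀ k : ℕ, ∀ β : Fin d → ℝ, ∀ ε : ℝ, 0 < ε → ∀ bs : ℕ → Fin d → ℝ,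
      Tendsto bs atTop (nhds β) →
      ∃ γs : ℕ → Fin d → ℝ, Tendsto γs atTop (nhds β) ∧
        (∀ᶠ n in atTop, ∀ j : Fin d, (j : ℕ) < k → γs n j = bs n j) ∧
        (∀ᶠ n in atTop, L (xs n) (γs n) ≤ L x β + ε) := by
    intro k
    induction k with
    | zero =>
      intro β ε hε bs hbs
      obtain ⟨γs, h1, h2⟩ := happrox β
      exact ⟨γs, h1, Eventually.of_forall (fun n j hj => absurd hj (Nat.not_lt_zero _)),
        h2 ε hε⟩
    | succ k ih =>
      intro β ε hε bs hbs
      by_cases hk : k < d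
      case neg =>
        obtain ⟨γs, h1, h2, h3⟩ := ih β ε hε bs hbs
        refine ⟨γs, h1, ?_, h3⟩
        filter_upwards [h2] with n hn j hj
        exact hn j (lt_of_lt_of_le j.isLt (le_of_not_gt hk))
      case pos =>
      set kk : Fin d := ⟨k, hk⟩ with hkk
      -- continuity of L x at β: pick δ
      have hcontβ : ContinuousAt (L x) β := hLcont.continuousAt
      obtain ⟨δ, hδpos, hδ⟩ : ∃ δ > 0, ∀ y : Fin d → ℝ, dist y β ≤ δ → L x y ≤ L x β + ε / 2 := by
        have h := Metric.continuousAt_iff.1 hcontβ (ε / 2) (by linarith)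
        obtain ⟨δ, hδpos, hδ⟩ := h
        refine ⟨δ / 2, by linarith, fun y hy => ?_⟩
        have := hδ (show dist y β < δ by linarith)
        have h2 : |L x y - L x β| < ε / 2 := by simpa [Real.dist_eq] using this
        linarith [abs_lt.1 h2 |>.1, abs_lt.1 h2 |>.2]
      set a : Fin d → ℝ := Function.update β kk (β kk - δ) with ha
      set b : Fin d → ℝ := Function.update β kk (β kk + δ) with hb
      have hdista : dist a β ≤ δ := by
        rw [dist_pi_le_iff hδpos.le]
        intro i
        by_cases hi : i = kk
        · subst hi
          simp only [ha, Function.update_self, Real.dist_eq]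
          rw [show β kk - δ - β kk = -δ by ring, abs_neg, abs_of_nonneg hδpos.le]
        · simp only [ha, Function.update_of_ne hi, dist_self]
          exact hδpos.le
      have hdistb : dist b β ≤ δ := by
        rw [dist_pi_le_iff hδpos.le]
        intro i
        by_cases hi : i = kk
        · subst hi
          simp only [hb, Function.update_self, Real.dist_eq]
          rw [show β kk + δ - β kk = δ by ring, abs_of_nonneg hδpos.le]
        · simp only [hb, Function.update_of_ne hi, dist_self]
          exact hδpos.le
      have hLa : L x a ≤ L x β + ε / 2 := hδ a hdista
      have hLb : L x b ≤ L x β + ε / 2 := hδ b hdistb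
      -- sequences tending to a and b
      have hbsa : Tendsto (fun n => Function.update (bs n) kk (β kk - δ)) atTop (nhds a) := by
        rw [tendsto_pi_nhds]
        intro i
        by_cases hi : i = kk
        · subst hi; simp [ha, tendsto_const_nhds]
        · simp only [Function.update_of_ne hi, ha]
          exact (tendsto_pi_nhds.1 hbs) i
      have hbsb : Tendsto (fun n => Function.update (bs n) kk (β kk + δ)) atTop (nhds b) := by
        rw [tendsto_pi_nhds]
        intro i
        by_cases hi : i = kk
        · subst hi; simp [hb, tendsto_const_nhds]
        · simp only [Function.update_of_ne hi, hb]
          exact (tendsto_pi_nhds.1 hbs) i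
      obtain ⟨γa, hγa, hγaeq, hγabd⟩ := ih a (ε / 2) (by linarith) _ hbsa
      obtain ⟨γb, hγb, hγbeq, hγbbd⟩ := ih b (ε / 2) (by linarith) _ hbsb
      -- the interpolation coefficient
      set lam : ℕ → ℝ := fun n => (γb n kk - bs n kk) / (γb n kk - γa n kk) with hlam
      set lam' : ℕ → ℝ := fun n => max 0 (min 1 (lam n)) with hlam'
      have hlam'mem : ∀ n, lam' n ∈ Set.Icc (0:ℝ) 1 := fun n =>
        ⟨le_max_left _ _, max_le zero_le_one (min_le_left _ _)⟩
      set γs : ℕ → Fin d → ℝ := fun n => lam' n • γa n + (1 - lam' n) • γb n with hγs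
      -- coordinate-k limits
      have hγak : Tendsto (fun n => γa n kk) atTop (nhds (β kk - δ)) := by
        have := (tendsto_pi_nhds.1 hγa) kk
        simpa [ha] using this
      have hγbk : Tendsto (fun n => γb n kk) atTop (nhds (β kk + δ)) := by
        have := (tendsto_pi_nhds.1 hγb) kk
        simpa [hb] using this
      have hbsk : Tendsto (fun n => bs n kk) atTop (nhds (β kk)) :=
        (tendsto_pi_nhds.1 hbs) kk
      have hlamlim : Tendsto lam atTop (nhds (1 / 2)) := by
        have hnum : Tendsto (fun n => γb n kk - bs n kk) atTop (nhds δ) := by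
          have := hγbk.sub hbsk
          simpa using this
        have hden : Tendsto (fun n => γb n kk - γa n kk) atTop (nhds (2 * δ)) := by
          have := hγbk.sub hγak
          convert this using 2
          ring
        have := hnum.div hden (by positivity)
        convert this using 2
        · rfl
        · rw [eq_comm, div_eq_iff (by positivity)]; ring
      have hlam'lim : Tendsto lam' atTop (nhds (1 / 2)) := by
        have h1 : Tendsto (fun n => min 1 (lam n)) atTop (nhds (min 1 (1/2))) :=
          tendsto_const_nhds.min hlamlim
        have h2 : Tendsto lam' atTop (nhds (max 0 (min 1 (1/2)))) :=
          tendsto_const_nhds.max h1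
        norm_num at h2
        exact h2
      -- γs tends to β
      have hγstend : Tendsto γs atTop (nhds β) := by
        have h1 : Tendsto (fun n => lam' n • γa n) atTop (nhds ((1/2 : ℝ) • a)) :=
          hlam'lim.smul hγa
        have h2 : Tendsto (fun n => (1 - lam' n) • γb n) atTop (nhds ((1 - 1/2 : ℝ) • b)) :=
          (tendsto_const_nhds.sub hlam'lim).smul hγb
        have h3 := h1.add h2
        have hab : (1/2 : ℝ) • a + (1 - 1/2 : ℝ) • b = β := by
          funext i
          by_cases hi : i = kk
          · subst hi
            simp [ha, hb]
            ring
          · simp [ha, hb, Function.update_of_ne hi]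
            ring
        rwa [hab] at h3
      refine ⟨γs, hγstend, ?_, ?_⟩
      -- eventual separation in coordinate k
      · have hsep : ∀ᶠ n in atTop, γa n kk < bs n kk ∧ bs n kk < γb n kk := by
          have e1 : ∀ᶠ n in atTop, γa n kk < β kk - δ / 2 :=
            hγak.eventually_lt_const (by linarith)
          have e2 : ∀ᶠ n in atTop, β kk + δ / 2 < γb n kk :=
            hγbk.eventually_const_lt (by linarith)
          have e3 : ∀ᶠ n in atTop, |bs n kk - β kk| < δ / 2 := by
            have := Metric.tendsto_atTop.1 hbsk (δ / 2) (by linarith)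
            obtain ⟨N, hN⟩ := this
            filter_upwards [eventually_ge_atTop N] with n hn
            simpa [Real.dist_eq] using hN n hn
          filter_upwards [e1, e2, e3] with n h1 h2 h3
          have := abs_lt.1 h3
          constructor <;> linarith [this.1, this.2]
        filter_upwards [hsep, hγaeq, hγbeq] with n ⟨hs1, hs2⟩ hea heb j hj
        have hden : γb n kk - γa n kk > 0 := by linarith
        have hlammem : lam n ∈ Set.Icc (0:ℝ) 1 := by
          constructor
          · apply div_nonneg (by linarith) hden.le
          · rw [div_le_one hden]; linarith
        have hlameq : lam' n = lam n := by
          show max 0 (min 1 (lam n)) = lam n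
          rw [min_eq_right hlammem.2, max_eq_right hlammem.1]
        by_cases hjk : (j : ℕ) < k
        · have hjne : j ≠ kk := by
            intro h; rw [h] at hjk; exact absurd hjk (lt_irrefl _)
          have h1 : γa n j = bs n j := by
            have := hea j hjk
            rwa [Function.update_of_ne hjne] at this
          have h2 : γb n j = bs n j := by
            have := heb j hjk
            rwa [Function.update_of_ne hjne] at this
          simp only [hγs, Pi.add_apply, Pi.smul_apply, smul_eq_mul, h1, h2]
          ring
        · have hjk' : (j : ℕ) = k := Nat.lt_succ_iff_lt_or_eq.1 hj |>.resolve_left hjk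
          have hjeq : j = kk := Fin.ext hjk'
          subst hjeq
          simp only [hγs, Pi.add_apply, Pi.smul_apply, smul_eq_mul, hlameq, hlam]
          field_simp
          ring
      -- the bound
      · have hbd1 : ∀ᶠ n in atTop, L (xs n) (γa n) ≤ L x β + ε := by
          filter_upwards [hγabd] with n hn
          linarith
        have hbd2 : ∀ᶠ n in atTop, L (xs n) (γb n) ≤ L x β + ε := by
          filter_upwards [hγbbd] with n hn
          linarith
        filter_upwards [hbd1, hbd2] with n h1 h2
        have hmem := hlam'mem n
        have hcx := (hconv (xs n)).2 (Set.mem_univ (γa n)) (Set.mem_univ (γb n))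
          hmem.1 (by linarith [hmem.2]) (by ring : lam' n + (1 - lam' n) = 1)
        simp only [smul_eq_mul] at hcx
        calc L (xs n) (γs n) ≤ lam' n * L (xs n) (γa n) + (1 - lam' n) * L (xs n) (γb n) := hcx
          _ ≤ lam' n * (L x β + ε) + (1 - lam' n) * (L x β + ε) := by
              apply add_le_add
              · exact mul_le_mul_of_nonneg_left h1 hmem.1
              · exact mul_le_mul_of_nonneg_left h2 (by linarith [hmem.2])
          _ = L x β + ε := by ring
  intro β βs hβs ε hε
  obtain ⟨γs, _, h2, h3⟩ := key d β ε hε βs hβs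
  filter_upwards [h2, h3] with n hn h3n
  have heq : γs n = βs n := funext fun j => hn j j.isLt
  rwa [heq] at h3n
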